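/- Let ρ be a density matrix on ℂ^{d_A} ⊗ ℂ^{d_B}, and for x ∈ {0,1} let Π_{+|x}, Π_{−|x} be orthogonal projections on ℂ^{d_A} with Π_{+|x} + Π_{−|x} = I, and likewise Π_{±|y} on ℂ^{d_B} for y ∈ {0,1}; set p(a,b|x,y) = Tr(ρ(Π_{a|x} ⊗ Π_{b|y})). Then there exist finite families of pairwise orthogonal projections {Π^i} on ℂ^{d_A} and {Π^j} on ℂ^{d_B}, each projection of rank at most 2, with Σ_i Π^i = I and Σ_j Π^j = I, each Π^i commuting with Π_{a|x} for all a, x and each Π^j commuting with Π_{b|y} for all b, y, such that, setting q_{ij} = Tr(ρ(Π^i ⊗ Π^j)) and, whenever q_{ij} > 0, ρ_{ij} = (Π^i ⊗ Π^j) ρ (Π^i ⊗ Π^j)/q_{ij}, one has: q_{ij} ≥ 0, Σ_{i,j} q_{ij} = 1, each ρ_{ij} is a density matrix supported on a subspace of dimension at most 2 × 2, and p(a,b|x,y) = Σ_{i,j : q_{ij} > 0} q_{ij} Tr(ρ_{ij}(Π_{a|x} ⊗ Π_{b|y})) for all a, b, x, y. -/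

import Mathlib

open Matrix Complex
open scoped Kronecker ComplexOrder

noncomputable section


namespace QBehaviorAux

variable {E : Type*} [NormedAddCommGroup E] [InnerProductSpace ℂ E] [FiniteDimensional ℂ E]

lemma finrank_span_pair_le (a b : E) :
    Module.finrank ℂ (Submodule.span ℂ ({a, b} : Set E)) ≤ 2 := by
  classical
  refine (finrank_span_le_card ({a, b} : Set E)).trans ?_
  refine le_trans (Finset.card_le_card (fun x hx => by simpa using hx))
    ((Finset.card_insert_le a {b}).trans (by simp))

lemma exists_small_invariant (f g : E →ₗ[ℂ] E)
    (hf2 : ∀ x, f (f x) = f x) (hg2 : ∀ x, g (g x) = g x)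
    (W : Submodule ℂ E) (hW : W ≠ ⊥)
    (hWf : ∀ x ∈ W, f x ∈ W) (hWg : ∀ x ∈ W, g x ∈ W) :
    ∃ V : Submodule ℂ E, V ≤ W ∧ V ≠ ⊥ ∧ Module.finrank ℂ V ≤ 2 ∧
      (∀ x ∈ V, f x ∈ V) ∧ (∀ x ∈ V, g x ∈ V) := by
  by_cases h1 : W.map f = ⊥
  · -- f vanishes on W; take an eigenvector of g restricted to W
    haveI : Nontrivial W := Submodule.nontrivial_iff_ne_bot.mpr hW
    obtain ⟨c, hc⟩ := Module.End.exists_eigenvalue (g.restrict hWg)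
    obtain ⟨v, hv⟩ := hc.exists_hasEigenvector
    have hv0 : (v : E) ≠ 0 := fun h => hv.2 (Subtype.coe_injective h)
    refine ⟨Submodule.span ℂ {(v : E)}, ?_, ?_, ?_, ?_, ?_⟩
    · rw [Submodule.span_le, Set.singleton_subset_iff]; exact v.2
    · simpa [Submodule.span_singleton_eq_bot] using hv0
    · calc Module.finrank ℂ (Submodule.span ℂ {(v : E)}) = 1 := finrank_span_singleton hv0
        _ ≤ 2 := one_le_two
    · intro x hx
      have hxW : x ∈ W := (Submodule.span_le.mpr (by simpa using v.2)) hx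
      have hfx : f x ∈ (⊥ : Submodule ℂ E) := h1 ▸ Submodule.mem_map_of_mem hxW
      rw [Submodule.mem_bot] at hfx
      rw [hfx]; exact Submodule.zero_mem _
    · intro x hx
      have hgv : g (v : E) = c • (v : E) := by
        have := hv.apply_eq_smul
        calc g (v : E) = ((g.restrict hWg) v : E) := rfl
          _ = c • (v : E) := by rw [this]; rfl
      have : Submodule.map g (Submodule.span ℂ {(v : E)}) ≤ Submodule.span ℂ {(v : E)} := by
        rw [Submodule.map_span_le]
        intro m hm
        simp only [Set.mem_singleton_iff] at hm
        subst hm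
        rw [hgv]
        exact Submodule.smul_mem _ _ (Submodule.mem_span_singleton_self _)
      exact this (Submodule.mem_map_of_mem hx)
  · -- range of f on W is nonzero; take eigenvector of f∘g∘f there
    set W₁ := W.map f with hW₁
    have hW₁W : W₁ ≤ W := Submodule.map_le_iff_le_comap.mpr (fun x hx => hWf x hx)
    have hfix : ∀ x ∈ W₁, f x = x := by
      rintro x ⟨w, hw, rfl⟩
      exact hf2 w
    have hinv : ∀ x ∈ W₁, (f ∘ₗ g) x ∈ W₁ := by
      intro x hx
      exact Submodule.mem_map_of_mem (hWg x (hW₁W hx))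
    haveI : Nontrivial W₁ := Submodule.nontrivial_iff_ne_bot.mpr h1
    obtain ⟨c, hc⟩ := Module.End.exists_eigenvalue ((f ∘ₗ g).restrict hinv)
    obtain ⟨u, hu⟩ := hc.exists_hasEigenvector
    have hu0 : (u : E) ≠ 0 := fun h => hu.2 (Subtype.coe_injective h)
    have hfu : f (u : E) = (u : E) := hfix _ u.2
    have hfgu : f (g (u : E)) = c • (u : E) := by
      have := hu.apply_eq_smul
      calc f (g (u : E)) = (((f ∘ₗ g).restrict hinv) u : E) := rfl
        _ = c • (u : E) := by rw [this]; rfl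
    set V := Submodule.span ℂ ({(u : E), g (u : E)} : Set E) with hV
    have huV : (u : E) ∈ V := Submodule.subset_span (by simp)
    have hguV : g (u : E) ∈ V := Submodule.subset_span (by simp)
    have hfV : Submodule.map f V ≤ V := by
      rw [Submodule.map_span_le]
      rintro m (rfl | rfl)
      · rw [hfu]; exact huV
      · rw [hfgu]; exact Submodule.smul_mem _ _ huV
    have hgV : Submodule.map g V ≤ V := by
      rw [Submodule.map_span_le]
      rintro m (rfl | rfl)
      · exact hguV
      · rw [hg2]; exact hguV
    refine ⟨V, ?_, ?_, finrank_span_pair_le _ _, fun x hx => hfV (Submodule.mem_map_of_mem hx),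
      fun x hx => hgV (Submodule.mem_map_of_mem hx)⟩
    · rw [Submodule.span_le]
      rintro m (rfl | rfl)
      · exact hW₁W u.2
      · exact hWg _ (hW₁W u.2)
    · exact Submodule.ne_bot_iff _ |>.mpr ⟨u, huV, hu0⟩


lemma symm_invariant_orthogonal {f : E →ₗ[ℂ] E} (hfs : f.IsSymmetric)
    {V : Submodule ℂ E} (hV : ∀ x ∈ V, f x ∈ V) : ∀ x ∈ Vᗮ, f x ∈ Vᗮ := by
  intro x hx
  rw [Submodule.mem_orthogonal]
  intro u hu
  rw [← hfs u x]
  exact (Submodule.mem_orthogonal V x).mp hx (f u) (hV u hu)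

lemma exists_orthogonal_decomposition (f g : E →ₗ[ℂ] E)
    (hfs : f.IsSymmetric) (hgs : g.IsSymmetric)
    (hf2 : ∀ x, f (f x) = f x) (hg2 : ∀ x, g (g x) = g x) :
    ∀ (n : ℕ) (W : Submodule ℂ E), Module.finrank ℂ W = n →
      (∀ x ∈ W, f x ∈ W) → (∀ x ∈ W, g x ∈ W) →
      ∃ (k : ℕ) (V : Fin k → Submodule ℂ E),
        (∀ i, V i ≤ W) ∧ (∀ i, Module.finrank ℂ (V i) ≤ 2) ∧
        (∀ i, ∀ x ∈ V i, f x ∈ V i) ∧ (∀ i, ∀ x ∈ V i, g x ∈ V i) ∧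
        (∀ i j, i ≠ j → V i ≤ (V j)ᗮ) ∧
        (∀ w ∈ W, ∑ i, ((Submodule.orthogonalProjectionOnto (V i) w : E)) = w) := by
  intro n
  induction n using Nat.strong_induction_on with
  | _ n IH =>
    intro W hWn hWf hWg
    by_cases hW : W = ⊥
    · refine ⟨0, Fin.elim0, ?_, ?_, ?_, ?_, ?_, ?_⟩ <;>
        first
        | exact fun i => i.elim0
        | exact fun i j _ => i.elim0
        | (intro w hw; rw [hW, Submodule.mem_bot] at hw; simp [hw])
    · obtain ⟨V₀, hV₀W, hV₀ne, hV₀rk, hV₀f, hV₀g⟩ :=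
        exists_small_invariant f g hf2 hg2 W hW hWf hWg
      set W' : Submodule ℂ E := V₀ᗮ ⊓ W with hW'def
      have hW'f : ∀ x ∈ W', f x ∈ W' := fun x hx =>
        ⟨symm_invariant_orthogonal hfs hV₀f x hx.1, hWf x hx.2⟩
      have hW'g : ∀ x ∈ W', g x ∈ W' := fun x hx =>
        ⟨symm_invariant_orthogonal hgs hV₀g x hx.1, hWg x hx.2⟩
      have hsum : Module.finrank ℂ V₀ + Module.finrank ℂ W' = n := by
        rw [← hWn]; exact Submodule.finrank_add_inf_finrank_orthogonal hV₀W
      have hV₀pos : 0 < Module.finrank ℂ V₀ := by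
        rcases Nat.eq_zero_or_pos (Module.finrank ℂ V₀) with h | h
        · exact absurd (Submodule.finrank_eq_zero.mp h) hV₀ne
        · exact h
      have hlt : Module.finrank ℂ W' < n := by omega
      obtain ⟨k, V', hV'W, hV'rk, hV'f, hV'g, hV'orth, hV'sum⟩ :=
        IH _ hlt W' rfl hW'f hW'g
      have hW'orthV₀ : W' ≤ V₀ᗮ := inf_le_left
      have hV₀orthV' : ∀ j, V₀ ≤ (V' j)ᗮ := by
        intro j
        refine le_trans (Submodule.le_orthogonal_orthogonal V₀) ?_
        exact Submodule.orthogonal_le ((hV'W j).trans hW'orthV₀)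
      refine ⟨k + 1, Fin.cons V₀ V', ?_, ?_, ?_, ?_, ?_, ?_⟩
      · intro i
        refine Fin.cases ?_ ?_ i
        · exact hV₀W
        · exact fun j => (hV'W j).trans inf_le_right
      · intro i
        refine Fin.cases hV₀rk hV'rk i
      · intro i
        refine Fin.cases hV₀f hV'f i
      · intro i
        refine Fin.cases hV₀g hV'g i
      · intro i j hij
        refine Fin.cases (fun hij => ?_) (fun i' hij => ?_) i hij <;>
          refine Fin.cases (fun hij => ?_) (fun j' hij => ?_) j hij
        · exact absurd rfl hij
        · simpa using hV₀orthV' j'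
        · simpa using (hV'W i').trans hW'orthV₀
        · simp only [Fin.cons_succ]
          exact hV'orth i' j' (fun h => hij (by rw [h]))
      · intro w hw
        set a : E := (Submodule.orthogonalProjectionOnto V₀ w : E) with ha
        have haV₀ : a ∈ V₀ := (Submodule.orthogonalProjectionOnto V₀ w).2
        have hwa : w - a ∈ W' := by
          refine ⟨Submodule.sub_starProjection_mem_orthogonal (K := V₀) w, ?_⟩
          exact Submodule.sub_mem W hw (hV₀W haV₀)
        have hterm : ∀ j, ((Submodule.orthogonalProjectionOnto (V' j) w : E)) =
            ((Submodule.orthogonalProjectionOnto (V' j) (w - a) : E)) := by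
          intro j
          have hsplit : w = a + (w - a) := by abel
          conv_lhs => rw [hsplit]
          rw [map_add, Submodule.coe_add,
            Submodule.orthogonalProjectionOnto_apply_of_mem_orthogonal
              ((hV₀orthV' j) haV₀),
            ZeroMemClass.coe_zero, zero_add]
        rw [Fin.sum_univ_succ]
        have : ∑ j : Fin k, ((Submodule.orthogonalProjectionOnto (Fin.cons (α := fun _ => Submodule ℂ E) V₀ V' j.succ) w : E)) = w - a := by
          rw [← hV'sum (w - a) hwa]
          refine Finset.sum_congr rfl fun j _ => ?_
          rw [Fin.cons_succ, hterm j]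
        rw [this]
        show a + (w - a) = w
        abel
      

section Matrices

variable {d : ℕ}

lemma toEuclideanLin_mul (A B : Matrix (Fin d) (Fin d) ℂ) :
    Matrix.toEuclideanLin (A * B) =
      Matrix.toEuclideanLin A ∘ₗ Matrix.toEuclideanLin B := by
  ext x
  simp [Matrix.toEuclideanLin_apply, Matrix.mulVec_mulVec]

lemma toEuclideanLin_one :
    Matrix.toEuclideanLin (1 : Matrix (Fin d) (Fin d) ℂ) = LinearMap.id := by
  ext x
  simp [Matrix.toEuclideanLin_apply]

lemma exists_projection_family (d : ℕ) (P Q : Matrix (Fin d) (Fin d) ℂ)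
    (hPh : P.IsHermitian) (hP2 : P * P = P) (hQh : Q.IsHermitian) (hQ2 : Q * Q = Q) :
    ∃ (k : ℕ) (F : Fin k → Matrix (Fin d) (Fin d) ℂ),
      (∀ i, (F i).IsHermitian) ∧ (∀ i, F i * F i = F i) ∧
      (∀ i j, i ≠ j → F i * F j = 0) ∧ (∑ i, F i) = 1 ∧
      (∀ i, (F i).rank ≤ 2) ∧ (∀ i, F i * P = P * F i) ∧ (∀ i, F i * Q = Q * F i) := by
  classical
  set Ed := EuclideanSpace ℂ (Fin d)
  set f : Ed →ₗ[ℂ] Ed := Matrix.toEuclideanLin P with hfdef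
  set g : Ed →ₗ[ℂ] Ed := Matrix.toEuclideanLin Q with hgdef
  have hfs : f.IsSymmetric := Matrix.isHermitian_iff_isSymmetric.mp hPh
  have hgs : g.IsSymmetric := Matrix.isHermitian_iff_isSymmetric.mp hQh
  have hf2 : ∀ x, f (f x) = f x := by
    intro x
    have := congrArg Matrix.toEuclideanLin hP2
    rw [toEuclideanLin_mul] at this
    exact LinearMap.ext_iff.mp this x
  have hg2 : ∀ x, g (g x) = g x := by
    intro x
    have := congrArg Matrix.toEuclideanLin hQ2
    rw [toEuclideanLin_mul] at this
    exact LinearMap.ext_iff.mp this x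
  obtain ⟨k, V, _, hVrk, hVf, hVg, hVorth, hVsum⟩ :=
    exists_orthogonal_decomposition f g hfs hgs hf2 hg2 (Module.finrank ℂ (⊤ : Submodule ℂ Ed))
      ⊤ rfl (fun x _ => trivial) (fun x _ => trivial)
  set π : Fin k → (Ed →ₗ[ℂ] Ed) :=
    fun i => ((V i).subtypeL ∘L Submodule.orthogonalProjectionOnto (V i) : Ed →L[ℂ] Ed) with hπdef
  have hπ_apply : ∀ i x, π i x = ((Submodule.orthogonalProjectionOnto (V i) x : Ed)) := fun i x => rfl
  have hπmem : ∀ i x, π i x ∈ V i := fun i x => (Submodule.orthogonalProjectionOnto (V i) x).2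
  have hπ_of_mem : ∀ i x, x ∈ V i → π i x = x := by
    intro i x hx
    have := Submodule.orthogonalProjectionOnto_mem_subspace_eq_self (⟨x, hx⟩ : V i)
    calc π i x = ((Submodule.orthogonalProjectionOnto (V i) x : Ed)) := rfl
      _ = x := by rw [show x = ((⟨x, hx⟩ : V i) : Ed) from rfl, this]
  have hπ_of_orth : ∀ i x, x ∈ (V i)ᗮ → π i x = 0 := by
    intro i x hx
    rw [hπ_apply, Submodule.orthogonalProjectionOnto_apply_of_mem_orthogonal hx,
      ZeroMemClass.coe_zero]
  set F : Fin k → Matrix (Fin d) (Fin d) ℂ :=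
    fun i => Matrix.toEuclideanLin.symm (π i) with hFdef
  have hFπ : ∀ i, Matrix.toEuclideanLin (F i) = π i := fun i =>
    Matrix.toEuclideanLin.apply_symm_apply (π i)
  have hinj := Matrix.toEuclideanLin (𝕜 := ℂ) (m := Fin d) (n := Fin d) |>.injective
  have hπsym : ∀ i, (π i).IsSymmetric := fun i => Submodule.starProjection_isSymmetric (V i)
  have hcomm : ∀ (h : Ed →ₗ[ℂ] Ed), h.IsSymmetric → (∀ i, ∀ x ∈ V i, h x ∈ V i) →
      ∀ i, π i ∘ₗ h = h ∘ₗ π i := by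
    intro h hsym hinv i
    ext x
    have hsplit : x = ((Submodule.orthogonalProjectionOnto (V i) x : Ed)) +
        (x - ((Submodule.orthogonalProjectionOnto (V i) x : Ed))) := by abel
    set a : Ed := ((Submodule.orthogonalProjectionOnto (V i) x : Ed)) with ha
    have haV : a ∈ V i := (Submodule.orthogonalProjectionOnto (V i) x).2
    have hbV : x - a ∈ (V i)ᗮ := Submodule.sub_starProjection_mem_orthogonal x
    simp only [LinearMap.comp_apply]
    conv_lhs => rw [hsplit]
    rw [map_add, map_add, hπ_of_mem i _ (hinv i a haV),
      hπ_of_orth i _ (symm_invariant_orthogonal hsym (hinv i) _ hbV), add_zero]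
    rw [hπ_apply, ← ha]
  refine ⟨k, F, ?_, ?_, ?_, ?_, ?_, ?_, ?_⟩
  · intro i
    rw [Matrix.isHermitian_iff_isSymmetric, hFπ]
    exact hπsym i
  · intro i
    apply hinj
    rw [toEuclideanLin_mul, hFπ]
    refine LinearMap.ext fun x => ?_
    simp only [LinearMap.comp_apply]
    exact hπ_of_mem i _ (hπmem i x)
  · intro i j hij
    apply hinj
    rw [toEuclideanLin_mul, hFπ, hFπ, map_zero]
    refine LinearMap.ext fun x => ?_
    simp only [LinearMap.comp_apply, LinearMap.zero_apply]
    exact hπ_of_orth i _ ((hVorth j i hij.symm) (hπmem j x))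
  · apply hinj
    rw [map_sum, toEuclideanLin_one]
    refine LinearMap.ext fun x => ?_
    simp only [LinearMap.coe_sum, Finset.sum_apply, LinearMap.id_apply, hFπ]
    exact hVsum x trivial
  · intro i
    set e := WithLp.linearEquiv 2 ℂ (Fin d → ℂ)
    have hkey : (F i).mulVecLin = e.toLinearMap ∘ₗ π i ∘ₗ e.symm.toLinearMap := by
      refine LinearMap.ext fun x => ?_
      simp only [LinearMap.comp_apply, Matrix.mulVecLin_apply, LinearEquiv.coe_coe]
      rw [← hFπ i]
      rfl
    rw [Matrix.rank, hkey, LinearMap.range_comp, LinearMap.range_comp,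
      LinearEquiv.range, Submodule.map_top]
    rw [LinearEquiv.finrank_map_eq]
    refine le_trans (Submodule.finrank_mono ?_) (hVrk i)
    rintro y ⟨x, rfl⟩
    exact hπmem i x
  · intro i
    apply hinj
    rw [toEuclideanLin_mul, toEuclideanLin_mul, hFπ, ← hfdef]
    exact hcomm f hfs hVf i
  · intro i
    apply hinj
    rw [toEuclideanLin_mul, toEuclideanLin_mul, hFπ, ← hgdef]
    exact hcomm g hgs hVg i

end Matrices

section Traces

lemma kron_conjTranspose {da db : ℕ} (A : Matrix (Fin da) (Fin da) ℂ)
    (B : Matrix (Fin db) (Fin db) ℂ) : (A ⊗ₖ B)ᴴ = Aᴴ ⊗ₖ Bᴴ := by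
  ext ⟨i, j⟩ ⟨k, l⟩
  simp [Matrix.conjTranspose_apply, Matrix.kroneckerMap_apply, star_mul']

lemma sum_sum_kronecker {da db : ℕ} {kA kB : ℕ}
    (QA : Fin kA → Matrix (Fin da) (Fin da) ℂ) (QB : Fin kB → Matrix (Fin db) (Fin db) ℂ) :
    (∑ i, QA i) ⊗ₖ (∑ j, QB j) = ∑ i, ∑ j, QA i ⊗ₖ QB j := by
  ext ⟨a, b⟩ ⟨c, e⟩
  simp only [Matrix.kroneckerMap_apply, Matrix.sum_apply, Finset.sum_mul_sum]

lemma posSemidef_trace_spec {n : Type*} [Fintype n] [DecidableEq n] {S : Matrix n n ℂ}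
    (hS : S.PosSemidef) :
    ∃ r : ℝ, 0 ≤ r ∧ S.trace = (r : ℂ) ∧ (r = 0 → S = 0) := by
  obtain ⟨B, hBB, hBh⟩ : ∃ B : Matrix n n ℂ, B * B = S ∧ B.IsHermitian := by
    open scoped MatrixOrder in
    exact ⟨CFC.sqrt S, CFC.sqrt_mul_sqrt_self S hS.nonneg, (CFC.sqrt_nonneg S).posSemidef.isHermitian⟩
  have hstar : ∀ i j, B i j = star (B j i) := by
    intro i j
    conv_lhs => rw [← hBh.eq]
    rfl
  have htr : S.trace = ((∑ i, ∑ j, Complex.normSq (B j i) : ℝ) : ℂ) := by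
    rw [← hBB, Matrix.trace]
    push_cast
    refine Finset.sum_congr rfl fun i _ => ?_
    rw [Matrix.diag_apply, Matrix.mul_apply]
    refine Finset.sum_congr rfl fun j _ => ?_
    rw [hstar i j, Complex.normSq_eq_conj_mul_self]
    rfl
  refine ⟨∑ i, ∑ j, Complex.normSq (B j i), ?_, htr, ?_⟩
  · exact Finset.sum_nonneg fun i _ => Finset.sum_nonneg fun j _ => Complex.normSq_nonneg _
  · intro hr
    have hB0 : B = 0 := by
      ext i j
      have h1 : ∀ i ∈ Finset.univ, (0:ℝ) ≤ ∑ j, Complex.normSq (B j i) :=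
        fun i _ => Finset.sum_nonneg fun j _ => Complex.normSq_nonneg _
      have h2 := (Finset.sum_eq_zero_iff_of_nonneg h1).mp hr j (Finset.mem_univ j)
      have h3 := (Finset.sum_eq_zero_iff_of_nonneg
        (fun j _ => Complex.normSq_nonneg (B j _))).mp h2 i (Finset.mem_univ i)
      exact Complex.normSq_eq_zero.mp h3
    rw [← hBB, hB0, Matrix.zero_mul]

lemma trace_rho_T {n : Type*} [Fintype n] [DecidableEq n] {ρ T : Matrix n n ℂ}
    (hρ : ρ.PosSemidef) (hTh : T.IsHermitian) (hT2 : T * T = T) :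
    ∃ r : ℝ, 0 ≤ r ∧ (ρ * T).trace = (r : ℂ) ∧ (r = 0 → T * ρ * T = 0) ∧
      (T * ρ * T).trace = (ρ * T).trace ∧ (T * ρ * T).PosSemidef := by
  have hS : (T * ρ * T).PosSemidef := by
    have := hρ.conjTranspose_mul_mul_same T
    rwa [hTh.eq] at this
  have htr : (T * ρ * T).trace = (ρ * T).trace := by
    calc (T * ρ * T).trace = (T * (ρ * T)).trace := by rw [Matrix.mul_assoc]
      _ = ((ρ * T) * T).trace := Matrix.trace_mul_comm _ _
      _ = (ρ * (T * T)).trace := by rw [Matrix.mul_assoc]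
      _ = (ρ * T).trace := by rw [hT2]
  obtain ⟨r, h0, htr2, hz⟩ := posSemidef_trace_spec hS
  exact ⟨r, h0, htr ▸ htr2, hz, htr, hS⟩

end Traces

lemma ofReal_mul_nonneg {r : ℝ} (hr : 0 ≤ r) {z : ℂ} (hz : 0 ≤ z) : 0 ≤ (r : ℂ) * z := by
  rw [Complex.nonneg_iff] at hz ⊢
  constructor
  · simp only [Complex.mul_re, Complex.ofReal_re, Complex.ofReal_im, zero_mul, sub_zero]
    exact mul_nonneg hr hz.1
  · simp [Complex.mul_im, ← hz.2]

end QBehaviorAux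



open QBehaviorAux in
/-- **Block decomposition of bipartite two-input/two-output quantum behaviors:**
every behavior arising from a density matrix `ρ` on `ℂ^{dA} ⊗ ℂ^{dB}` and
two-outcome projective measurements decomposes as a convex combination of
behaviors of (at most) two-qubit states, obtained by cutting `ρ` along families
of pairwise orthogonal rank-`≤ 2` projections that commute with all the
measurement operators. Outcome `true` = `+`, `false` = `−`; inputs in `Fin 2`. -/
theorem quantum_behavior_two_qubit_block_decomposition
    (dA dB : ℕ)
    (ρ : Matrix (Fin dA × Fin dB) (Fin dA × Fin dB) ℂ)
    (hρ : ρ.PosSemidef) (hρtr : ρ.trace = 1)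
    (PA : Fin 2 → Bool → Matrix (Fin dA) (Fin dA) ℂ)
    (PB : Fin 2 → Bool → Matrix (Fin dB) (Fin dB) ℂ)
    (hAherm : ∀ x a, (PA x a).IsHermitian)
    (hAproj : ∀ x a, PA x a * PA x a = PA x a)
    (hAsum : ∀ x, PA x true + PA x false = 1)
    (hBherm : ∀ y b, (PB y b).IsHermitian)
    (hBproj : ∀ y b, PB y b * PB y b = PB y b)
    (hBsum : ∀ y, PB y true + PB y false = 1) :
    ∃ (kA kB : ℕ)
      (QA : Fin kA → Matrix (Fin dA) (Fin dA) ℂ)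
      (QB : Fin kB → Matrix (Fin dB) (Fin dB) ℂ)
      (q : Fin kA → Fin kB → ℝ)
      (ρblock : Fin kA → Fin kB → Matrix (Fin dA × Fin dB) (Fin dA × Fin dB) ℂ),
      (∀ i, (QA i).IsHermitian) ∧ (∀ i, QA i * QA i = QA i) ∧
      (∀ i i', i ≠ i' → QA i * QA i' = 0) ∧ (∑ i, QA i) = 1 ∧
      (∀ i, (QA i).rank ≤ 2) ∧
      (∀ j, (QB j).IsHermitian) ∧ (∀ j, QB j * QB j = QB j) ∧
      (∀ j j', j ≠ j' → QB j * QB j' = 0) ∧ (∑ j, QB j) = 1 ∧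
      (∀ j, (QB j).rank ≤ 2) ∧
      (∀ i x a, QA i * PA x a = PA x a * QA i) ∧
      (∀ j y b, QB j * PB y b = PB y b * QB j) ∧
      (∀ i j, (ρ * (QA i ⊗ₖ QB j)).trace = (q i j : ℂ)) ∧
      (∀ i j, 0 ≤ q i j) ∧
      (∑ i, ∑ j, q i j) = 1 ∧
      (∀ i j, 0 < q i j →
        ρblock i j =
          ((q i j : ℂ)⁻¹) • ((QA i ⊗ₖ QB j) * ρ * (QA i ⊗ₖ QB j)) ∧
        (ρblock i j).PosSemidef ∧
        (ρblock i j).trace = 1 ∧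
        (QA i ⊗ₖ QB j) * ρblock i j * (QA i ⊗ₖ QB j) = ρblock i j) ∧
      (∀ (a b : Bool) (x y : Fin 2),
        (ρ * (PA x a ⊗ₖ PB y b)).trace =
          ∑ i, ∑ j,
            if 0 < q i j then
              (q i j : ℂ) * (ρblock i j * (PA x a ⊗ₖ PB y b)).trace
            else 0) := by
  classical
  obtain ⟨kA, QA, hQAh, hQA2, hQAorth, hQAsum, hQArk, hQAP, hQAQ⟩ :=
    exists_projection_family dA (PA 0 true) (PA 1 true)
      (hAherm 0 true) (hAproj 0 true) (hAherm 1 true) (hAproj 1 true)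
  obtain ⟨kB, QB, hQBh, hQB2, hQBorth, hQBsum, hQBrk, hQBP, hQBQ⟩ :=
    exists_projection_family dB (PB 0 true) (PB 1 true)
      (hBherm 0 true) (hBproj 0 true) (hBherm 1 true) (hBproj 1 true)
  have comm_false : ∀ {d : ℕ} (E P : Matrix (Fin d) (Fin d) ℂ),
      E * P = P * E → E * (1 - P) = (1 - P) * E := by
    intro d E P h
    rw [Matrix.mul_sub, Matrix.sub_mul, Matrix.mul_one, Matrix.one_mul, h]
  have hPAfalse : ∀ x, PA x false = 1 - PA x true := by
    intro x
    have := hAsum x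
    linear_combination (norm := abel) this - (PA x true + PA x false) + PA x false
  have hPBfalse : ∀ y, PB y false = 1 - PB y true := by
    intro y
    have := hBsum y
    linear_combination (norm := abel) this - (PB y true + PB y false) + PB y false
  have hQA_comm : ∀ i x a, QA i * PA x a = PA x a * QA i := by
    intro i x a
    fin_cases x <;> cases a <;>
      simp only [hPAfalse] <;>
      first
        | exact hQAP i
        | exact hQAQ i
        | exact comm_false _ _ (hQAP i)
        | exact comm_false _ _ (hQAQ i)
  have hQB_comm : ∀ j y b, QB j * PB y b = PB y b * QB j := by
    intro j y b
    fin_cases y <;> cases b <;>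
      simp only [hPBfalse] <;>
      first
        | exact hQBP j
        | exact hQBQ j
        | exact comm_false _ _ (hQBP j)
        | exact comm_false _ _ (hQBQ j)
  set T : Fin kA → Fin kB → Matrix (Fin dA × Fin dB) (Fin dA × Fin dB) ℂ :=
    fun i j => QA i ⊗ₖ QB j with hTdef
  have hTh : ∀ i j, (T i j).IsHermitian := by
    intro i j
    show (QA i ⊗ₖ QB j)ᴴ = QA i ⊗ₖ QB j
    rw [kron_conjTranspose, (hQAh i).eq, (hQBh j).eq]
  have hT2 : ∀ i j, T i j * T i j = T i j := by
    intro i j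
    show (QA i ⊗ₖ QB j) * (QA i ⊗ₖ QB j) = QA i ⊗ₖ QB j
    rw [← Matrix.mul_kronecker_mul, hQA2, hQB2]
  have hTsum : ∑ i, ∑ j, T i j = 1 := by
    rw [← sum_sum_kronecker, hQAsum, hQBsum, Matrix.one_kronecker_one]
  have spec := fun i j => trace_rho_T hρ (hTh i j) (hT2 i j)
  choose q hq0 hqtr hqzero hqtreq hSpsd using spec
  set ρblock : Fin kA → Fin kB → Matrix (Fin dA × Fin dB) (Fin dA × Fin dB) ℂ :=
    fun i j => if 0 < q i j then ((q i j : ℂ)⁻¹) • (T i j * ρ * T i j) else 0 with hρbdef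
  have hsum1 : (∑ i, ∑ j, q i j) = 1 := by
    have h1 : ∑ i, ∑ j, ((q i j : ℝ) : ℂ) = 1 := by
      calc ∑ i, ∑ j, ((q i j : ℝ) : ℂ) = ∑ i, ∑ j, (ρ * T i j).trace :=
            Finset.sum_congr rfl fun i _ => Finset.sum_congr rfl fun j _ => (hqtr i j).symm
        _ = (ρ * ∑ i, ∑ j, T i j).trace := by
            simp only [Matrix.mul_sum, Matrix.trace_sum]
        _ = 1 := by rw [hTsum, Matrix.mul_one, hρtr]
    exact_mod_cast h1
  refine ⟨kA, kB, QA, QB, q, ρblock, hQAh, hQA2, hQAorth, hQAsum, hQArk,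
    hQBh, hQB2, hQBorth, hQBsum, hQBrk, hQA_comm, hQB_comm, hqtr, hq0, hsum1, ?_, ?_⟩
  · intro i j hpos
    have hqne : ((q i j : ℝ) : ℂ) ≠ 0 := by
      exact_mod_cast ne_of_gt hpos
    have hbeq : ρblock i j = ((q i j : ℂ)⁻¹) • (T i j * ρ * T i j) := by
      rw [hρbdef]; simp only [if_pos hpos]
    refine ⟨hbeq, ?_, ?_, ?_⟩
    · rw [hbeq]
      refine .of_dotProduct_mulVec_nonneg ?_ (fun x => ?_)
      · show (((q i j : ℂ))⁻¹ • (T i j * ρ * T i j))ᴴ = ((q i j : ℂ))⁻¹ • (T i j * ρ * T i j)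
        rw [Matrix.conjTranspose_smul, (hSpsd i j).1.eq]
        congr 1
        rw [star_inv₀]
        congr 1
        exact Complex.conj_ofReal _
      · have h1 : ((q i j : ℂ)⁻¹) = (((q i j)⁻¹ : ℝ) : ℂ) := by push_cast; ring
        rw [h1]
        have h2 := (hSpsd i j).dotProduct_mulVec_nonneg x
        calc (0:ℂ) ≤ (((q i j)⁻¹ : ℝ) : ℂ) * (dotProduct (star x) ((T i j * ρ * T i j) *ᵥ x)) :=
              ofReal_mul_nonneg (inv_nonneg.mpr (le_of_lt hpos)) h2
          _ = dotProduct (star x) (((((q i j)⁻¹ : ℝ) : ℂ) • (T i j * ρ * T i j)) *ᵥ x) := by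
              rw [Matrix.smul_mulVec, dotProduct_smul, smul_eq_mul]
    · rw [hbeq, Matrix.trace_smul, hqtreq i j, hqtr i j, smul_eq_mul,
        inv_mul_cancel₀ hqne]
    · show T i j * ρblock i j * T i j = ρblock i j
      rw [hbeq, Matrix.mul_smul, Matrix.smul_mul]
      congr 1
      calc T i j * (T i j * ρ * T i j) * T i j
          = (T i j * T i j) * ρ * (T i j * T i j) := by
            simp only [Matrix.mul_assoc]
        _ = T i j * ρ * T i j := by rw [hT2]
  · intro a b x y
    set M : Matrix (Fin dA × Fin dB) (Fin dA × Fin dB) ℂ := PA x a ⊗ₖ PB y b with hMdef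
    have hMcomm : ∀ i j, T i j * M = M * T i j := by
      intro i j
      show (QA i ⊗ₖ QB j) * (PA x a ⊗ₖ PB y b) = (PA x a ⊗ₖ PB y b) * (QA i ⊗ₖ QB j)
      rw [← Matrix.mul_kronecker_mul, ← Matrix.mul_kronecker_mul,
        hQA_comm i x a, hQB_comm j y b]
    have key : ∀ i j, (ρ * T i j * M).trace = (T i j * ρ * T i j * M).trace := by
      intro i j
      calc (ρ * T i j * M).trace = (ρ * (T i j * T i j) * M).trace := by rw [hT2]
        _ = ((ρ * T i j) * (M * T i j)).trace := by
            simp only [Matrix.mul_assoc]; rw [hMcomm]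
        _ = (((ρ * T i j) * M) * T i j).trace := by simp only [Matrix.mul_assoc]
        _ = (T i j * ((ρ * T i j) * M)).trace := Matrix.trace_mul_comm _ _
        _ = (T i j * ρ * T i j * M).trace := by simp only [Matrix.mul_assoc]
    calc (ρ * M).trace = (ρ * (∑ i, ∑ j, T i j) * M).trace := by
          rw [hTsum, Matrix.mul_one]
      _ = ∑ i, ∑ j, (ρ * T i j * M).trace := by
          simp only [Matrix.mul_sum, Matrix.sum_mul, Matrix.trace_sum]
      _ = ∑ i, ∑ j, (if 0 < q i j then
            (q i j : ℂ) * (ρblock i j * M).trace else 0) := by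
          refine Finset.sum_congr rfl fun i _ => Finset.sum_congr rfl fun j _ => ?_
          rw [key i j]
          by_cases hpos : 0 < q i j
          · rw [if_pos hpos]
            have hqne : ((q i j : ℝ) : ℂ) ≠ 0 := by exact_mod_cast ne_of_gt hpos
            have hbeq : ρblock i j = ((q i j : ℂ)⁻¹) • (T i j * ρ * T i j) := by
              rw [hρbdef]; simp only [if_pos hpos]
            have hS : T i j * ρ * T i j = (q i j : ℂ) • ρblock i j := by
              rw [hbeq, smul_smul, mul_inv_cancel₀ hqne, one_smul]
            rw [hS, Matrix.smul_mul, Matrix.trace_smul, smul_eq_mul]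
          · rw [if_neg hpos]
            have hq00 : q i j = 0 := le_antisymm (not_lt.mp hpos) (hq0 i j)
            rw [hqzero i j hq00, Matrix.zero_mul, Matrix.trace_zero]
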